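/- Suppose min_{1 ≤ i ≤ d-1} liminf_n p_i > 0 and n·p_d / log n → ∞. Then almost surely, for all sufficiently large n, the multi-parameter random simplicial complex Y_d(n,p) contains no maximal (d-1)-cell. -/

import Mathlib

open MeasureTheory ProbabilityTheory Filter

/-- A set `σ` belongs to the multi-parameter random simplicial complex (for outcome `ω`)
iff every subset `τ ⊆ σ` with `|τ| ≥ 2` is marked. -/
def memY {n : ℕ} (mark : Finset (Fin n) → Bool) (σ : Finset (Fin n)) : Prop :=
  ∀ τ ∈ σ.powerset, 2 ≤ τ.card → mark τ = true

instance {n : ℕ} (mark : Finset (Fin n) → Bool) : DecidablePred (memY mark) := by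
  unfold memY; infer_instance

/-- The number of maximal `(d-1)`-cells of the complex. -/
def numMaximal (n d : ℕ) (mark : Finset (Fin n) → Bool) : ℕ :=
  ((Finset.univ.powersetCard d).filter
    (fun σ => memY mark σ ∧ ∀ v : Fin n, v ∉ σ → ¬ memY mark (insert v σ))).card

namespace Stmt7Aux

variable {Ω : Type*} [MeasurableSpace Ω] {μ : Measure Ω}

lemma measurableSet_pi_bool {ι : Type*} [Finite ι] (s : Set (ι → Bool)) :
    MeasurableSet s := by
  have : Countable ι := Finite.to_countable
  exact (Set.to_countable s).measurableSet

lemma meas_union_false {ι : Type*} (f : ι → Ω → Bool) (hf : ∀ i, Measurable (f i))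
    (hindep : iIndepFun f μ) [IsProbabilityMeasure μ]
    (S : Finset ι) :
    μ (⋃ i ∈ S, {ω | f i ω = false}) = 1 - ∏ i ∈ S, μ {ω | f i ω = true} := by
  classical
  have hBmeas : ∀ i : ι, MeasurableSet {ω | f i ω = true} :=
    fun i => hf i (show MeasurableSet {x : Bool | x = true} from trivial)
  have hcompl : (⋃ i ∈ S, {ω | f i ω = false}) = (⋂ i ∈ S, {ω | f i ω = true})ᶜ := by
    ext ω
    simp only [Set.mem_iUnion, Set.mem_compl_iff, Set.mem_iInter, Set.mem_setOf_eq,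
      not_forall, Bool.not_eq_true, exists_prop]
  have hprod : μ (⋂ i ∈ S, {ω | f i ω = true}) = ∏ i ∈ S, μ {ω | f i ω = true} := by
    refine hindep.meas_biInter (fun i _ => ?_)
    exact MeasurableSpace.measurableSet_comap.mpr ⟨{true}, trivial, rfl⟩
  rw [hcompl, prob_compl_eq_one_sub (Finset.measurableSet_biInter S fun i _ => hBmeas i), hprod]

lemma meas_iInter_union_eq_prod {ι κ : Type*} (f : ι → Ω → Bool)
    (hf : ∀ i, Measurable (f i))
    (hindep : iIndepFun f μ) [IsProbabilityMeasure μ]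
    (S : κ → Finset ι) (F : Finset κ)
    (hdisj : ∀ k ∈ F, ∀ l ∈ F, k ≠ l → Disjoint (S k) (S l)) :
    μ (⋂ k ∈ F, ⋃ i ∈ S k, {ω | f i ω = false})
      = ∏ k ∈ F, μ (⋃ i ∈ S k, {ω | f i ω = false}) := by
  classical
  induction F using Finset.induction_on with
  | empty => simp
  | @insert k0 F hk0 ih =>
    have hdisj' : ∀ k ∈ F, ∀ l ∈ F, k ≠ l → Disjoint (S k) (S l) := fun k hk l hl =>
      hdisj k (Finset.mem_insert_of_mem hk) l (Finset.mem_insert_of_mem hl)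
    rw [Finset.set_biInter_insert, Finset.prod_insert hk0, ← ih hdisj']
    set T : Finset ι := F.biUnion S with hT
    have hST : Disjoint (S k0) T := by
      rw [hT, Finset.disjoint_biUnion_right]
      intro k hk
      exact hdisj k0 (Finset.mem_insert_self _ _) k (Finset.mem_insert_of_mem hk)
        (fun h => hk0 (h ▸ hk))
    have hIF := hindep.indepFun_finset (S k0) T hST hf
    set g : Ω → {x // x ∈ S k0} → Bool := fun ω i => f i.1 ω with hg
    set h : Ω → {x // x ∈ T} → Bool := fun ω i => f i.1 ω with hh
    set s1 : Set ({x // x ∈ S k0} → Bool) := {x | ∃ i, x i = false} with hs1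
    set s2 : Set ({x // x ∈ T} → Bool) :=
      {x | ∀ k ∈ F, ∃ i : {x // x ∈ T}, (i : ι) ∈ S k ∧ x i = false} with hs2
    have hpre1 : g ⁻¹' s1 = ⋃ i ∈ S k0, {ω | f i ω = false} := by
      ext ω
      simp only [Set.mem_preimage, hs1, Set.mem_setOf_eq, hg, Set.mem_iUnion]
      constructor
      · rintro ⟨i, hi⟩; exact ⟨i, i.2, hi⟩
      · rintro ⟨i, hi, hx⟩; exact ⟨⟨i, hi⟩, hx⟩
    have hpre2 : h ⁻¹' s2 = ⋂ k ∈ F, ⋃ i ∈ S k, {ω | f i ω = false} := by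
      ext ω
      simp only [Set.mem_preimage, hs2, Set.mem_setOf_eq, hh, Set.mem_iInter, Set.mem_iUnion]
      constructor
      · intro H k hk
        obtain ⟨i, hiS, hx⟩ := H k hk
        exact ⟨i, hiS, hx⟩
      · intro H k hk
        obtain ⟨i, hiS, hx⟩ := H k hk
        exact ⟨⟨i, Finset.mem_biUnion.mpr ⟨k, hk, hiS⟩⟩, hiS, hx⟩
    have := hIF.measure_inter_preimage_eq_mul s1 s2 (measurableSet_pi_bool s1)
      (measurableSet_pi_bool s2)
    rw [hpre1, hpre2] at this
    exact this

/-- The collection of subsets of `insert v σ` containing `v` with at least 2 elements. -/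
def Sv {n : ℕ} (σ : Finset (Fin n)) (v : Fin n) : Finset (Finset (Fin n)) :=
  (insert v σ).powerset.filter (fun τ => v ∈ τ ∧ 2 ≤ τ.card)

lemma Sv_disjoint {n : ℕ} (σ : Finset (Fin n)) {v w : Fin n} (hv : v ∉ σ)
    (hvw : v ≠ w) : Disjoint (Sv σ v) (Sv σ w) := by
  rw [Finset.disjoint_left]
  intro τ hτv hτw
  simp only [Sv, Finset.mem_filter, Finset.mem_powerset] at hτv hτw
  have hvmem : v ∈ insert w σ := hτw.1 hτv.2.1
  rcases Finset.mem_insert.mp hvmem with h | h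
  · exact hvw h
  · exact hv h

lemma prod_lower {n d : ℕ} (hd : 2 ≤ d) {σ : Finset (Fin n)} (hσ : σ.card = d) {v : Fin n}
    (hv : v ∉ σ) (pr : ℕ → ℝ)
    (hp01 : ∀ i, 1 ≤ i → i ≤ d → 0 < pr i ∧ pr i ≤ 1)
    {c : ℝ} (hc0 : 0 < c) (hc1 : c ≤ 1)
    (hc : ∀ i, 1 ≤ i → i ≤ d - 1 → c ≤ pr i) :
    c ^ 2 ^ (d + 1) * pr d ≤ ∏ τ ∈ Sv σ v, pr (τ.card - 1) := by
  classical
  have hcard_ins : (insert v σ).card = d + 1 := by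
    rw [Finset.card_insert_of_notMem hv, hσ]
  have hmem0 : insert v σ ∈ Sv σ v := by
    simp only [Sv, Finset.mem_filter, Finset.mem_powerset]
    exact ⟨subset_rfl, Finset.mem_insert_self _ _, by omega⟩
  have hrest : ∀ τ ∈ (Sv σ v).erase (insert v σ), c ≤ pr (τ.card - 1) := by
    intro τ hτ
    obtain ⟨hne, hτ'⟩ := Finset.mem_erase.mp hτ
    simp only [Sv, Finset.mem_filter, Finset.mem_powerset] at hτ'
    have hlt : τ.card < d + 1 := by
      have := Finset.card_lt_card (Finset.ssubset_iff_subset_ne.mpr ⟨hτ'.1, hne⟩)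
      omega
    have h2 := hτ'.2.2
    exact hc _ (by omega) (by omega)
  rw [← Finset.mul_prod_erase _ _ hmem0, hcard_ins, Nat.add_sub_cancel]
  have hcK : c ^ 2 ^ (d + 1) ≤ ∏ τ ∈ (Sv σ v).erase (insert v σ), pr (τ.card - 1) := by
    have h1 : c ^ 2 ^ (d + 1) ≤ c ^ ((Sv σ v).erase (insert v σ)).card := by
      apply pow_le_pow_of_le_one hc0.le hc1
      calc ((Sv σ v).erase (insert v σ)).card ≤ (Sv σ v).card := Finset.card_erase_le
        _ ≤ (insert v σ).powerset.card := Finset.card_le_card (Finset.filter_subset _ _)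
        _ = 2 ^ (d + 1) := by rw [Finset.card_powerset, hcard_ins]
    refine h1.trans ?_
    rw [← Finset.prod_const]
    exact Finset.prod_le_prod (fun _ _ => hc0.le) (fun τ hτ => hrest τ hτ)
  calc c ^ 2 ^ (d + 1) * pr d
      ≤ (∏ τ ∈ (Sv σ v).erase (insert v σ), pr (τ.card - 1)) * pr d :=
        mul_le_mul_of_nonneg_right hcK (hp01 d (by omega) le_rfl).1.le
    _ = pr d * ∏ τ ∈ (Sv σ v).erase (insert v σ), pr (τ.card - 1) := mul_comm _ _

lemma core {d : ℕ} (hd : 2 ≤ d) {n : ℕ} (hn : d + 1 ≤ n)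
    {Ω : Type*} [MeasurableSpace Ω] (μ : Measure Ω) [IsProbabilityMeasure μ]
    (mark : Finset (Fin n) → Ω → Bool)
    (hmeas : ∀ τ, Measurable (mark τ))
    (hindep : iIndepFun mark μ)
    (pr : ℕ → ℝ)
    (hprob : ∀ τ : Finset (Fin n), 2 ≤ τ.card → τ.card ≤ d + 1 →
      μ {ω | mark τ ω = true} = ENNReal.ofReal (pr (τ.card - 1)))
    (hp01 : ∀ i, 1 ≤ i → i ≤ d → 0 < pr i ∧ pr i ≤ 1)
    {c : ℝ} (hc0 : 0 < c) (hc1 : c ≤ 1)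
    (hc : ∀ i, 1 ≤ i → i ≤ d - 1 → c ≤ pr i) :
    μ {ω | numMaximal n d (fun τ => mark τ ω) ≠ 0}
      ≤ (n.choose d : ENNReal) *
        ENNReal.ofReal (Real.exp (-(c ^ 2 ^ (d + 1) * pr d) * ((n - d : ℕ) : ℝ))) := by
  classical
  set q : ℝ := c ^ 2 ^ (d + 1) * pr d with hqdef
  have hprd := hp01 d (by omega) le_rfl
  have hq0 : 0 ≤ q := mul_nonneg (pow_nonneg hc0.le _) hprd.1.le
  have hq1 : q ≤ 1 := mul_le_one₀ (pow_le_one₀ hc0.le hc1) hprd.1.le hprd.2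
  have key : ∀ σ : Finset (Fin n), σ.card = d →
      μ {ω | memY (fun τ => mark τ ω) σ ∧
             ∀ v : Fin n, v ∉ σ → ¬ memY (fun τ => mark τ ω) (insert v σ)}
        ≤ ENNReal.ofReal (Real.exp (-q * ((n - d : ℕ) : ℝ))) := by
    intro σ hσ
    have hsub : {ω | memY (fun τ => mark τ ω) σ ∧
        ∀ v : Fin n, v ∉ σ → ¬ memY (fun τ => mark τ ω) (insert v σ)}
        ⊆ ⋂ v ∈ Finset.univ \ σ, ⋃ τ ∈ Sv σ v, {ω | mark τ ω = false} := by
      intro ω hω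
      refine Set.mem_iInter₂.mpr (fun v hv => ?_)
      have hv' : v ∉ σ := (Finset.mem_sdiff.mp hv).2
      have hnot := hω.2 v hv'
      unfold memY at hnot
      push_neg at hnot
      obtain ⟨τ, hτsub, hτ2, hτfalse⟩ := hnot
      rw [Finset.mem_powerset] at hτsub
      have hvτ : v ∈ τ := by
        by_contra hvτ
        have hsubσ : τ ⊆ σ := fun x hx => (Finset.mem_insert.mp (hτsub hx)).resolve_left
          (by rintro rfl; exact hvτ hx)
        exact hτfalse (hω.1 τ (Finset.mem_powerset.mpr hsubσ) hτ2)
      have hτS : τ ∈ Sv σ v := by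
        simp only [Sv, Finset.mem_filter, Finset.mem_powerset]
        exact ⟨hτsub, hvτ, hτ2⟩
      exact Set.mem_biUnion hτS (Bool.eq_false_iff.mpr hτfalse)
    have hprodA := meas_iInter_union_eq_prod (μ := μ) mark hmeas hindep (Sv σ)
      (Finset.univ \ σ)
      (fun v hv w hw hvw => Sv_disjoint σ (Finset.mem_sdiff.mp hv).2 hvw)
    have hAv : ∀ v ∈ Finset.univ \ σ,
        μ (⋃ τ ∈ Sv σ v, {ω | mark τ ω = false}) ≤ 1 - ENNReal.ofReal q := by
      intro v hv
      have hv' : v ∉ σ := (Finset.mem_sdiff.mp hv).2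
      rw [meas_union_false mark hmeas hindep (Sv σ v)]
      apply tsub_le_tsub_left
      have hcards : ∀ τ ∈ Sv σ v, 2 ≤ τ.card ∧ τ.card ≤ d + 1 := by
        intro τ hτ
        simp only [Sv, Finset.mem_filter, Finset.mem_powerset] at hτ
        refine ⟨hτ.2.2, ?_⟩
        have := Finset.card_le_card hτ.1
        rwa [Finset.card_insert_of_notMem hv', hσ] at this
      have hprodval : ∏ τ ∈ Sv σ v, μ {ω | mark τ ω = true}
          = ENNReal.ofReal (∏ τ ∈ Sv σ v, pr (τ.card - 1)) := by
        rw [ENNReal.ofReal_prod_of_nonneg (fun τ hτ => by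
          obtain ⟨h2, hle⟩ := hcards τ hτ
          exact (hp01 (τ.card - 1) (by omega) (by omega)).1.le)]
        exact Finset.prod_congr rfl (fun τ hτ =>
          hprob τ (hcards τ hτ).1 (hcards τ hτ).2)
      rw [hprodval]
      exact ENNReal.ofReal_le_ofReal (prod_lower hd hσ hv' pr hp01 hc0 hc1 hc)
    have hm : (Finset.univ \ σ).card = n - d := by
      rw [Finset.card_sdiff_of_subset (Finset.subset_univ σ), Finset.card_univ, Fintype.card_fin, hσ]
    calc μ {ω | memY (fun τ => mark τ ω) σ ∧
             ∀ v : Fin n, v ∉ σ → ¬ memY (fun τ => mark τ ω) (insert v σ)}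
        ≤ μ (⋂ v ∈ Finset.univ \ σ, ⋃ τ ∈ Sv σ v, {ω | mark τ ω = false}) :=
          measure_mono hsub
      _ = ∏ v ∈ Finset.univ \ σ, μ (⋃ τ ∈ Sv σ v, {ω | mark τ ω = false}) := hprodA
      _ ≤ ∏ _v ∈ Finset.univ \ σ, (1 - ENNReal.ofReal q) := Finset.prod_le_prod' hAv
      _ = (1 - ENNReal.ofReal q) ^ (n - d) := by rw [Finset.prod_const, hm]
      _ = ENNReal.ofReal (1 - q) ^ (n - d) := by
          rw [ENNReal.ofReal_sub 1 hq0, ENNReal.ofReal_one]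
      _ = ENNReal.ofReal ((1 - q) ^ (n - d)) := (ENNReal.ofReal_pow (by linarith) _).symm
      _ ≤ ENNReal.ofReal (Real.exp (-q * ((n - d : ℕ) : ℝ))) := by
          apply ENNReal.ofReal_le_ofReal
          have h1 : (1 - q) ≤ Real.exp (-q) := by
            have := Real.add_one_le_exp (-q); linarith
          calc (1 - q) ^ (n - d) ≤ Real.exp (-q) ^ (n - d) :=
              pow_le_pow_left₀ (by linarith) h1 _
            _ = Real.exp (-q * ((n - d : ℕ) : ℝ)) := by
              rw [← Real.exp_nat_mul, mul_comm]
  have hcover : {ω | numMaximal n d (fun τ => mark τ ω) ≠ 0}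
      ⊆ ⋃ σ ∈ Finset.univ.powersetCard d, {ω | memY (fun τ => mark τ ω) σ ∧
          ∀ v : Fin n, v ∉ σ → ¬ memY (fun τ => mark τ ω) (insert v σ)} := by
    intro ω hω
    have hne : (((Finset.univ.powersetCard d)).filter
        (fun σ => memY (fun τ => mark τ ω) σ ∧
          ∀ v : Fin n, v ∉ σ → ¬ memY (fun τ => mark τ ω) (insert v σ))).Nonempty := by
      rw [← Finset.card_ne_zero]
      exact hω
    obtain ⟨σ, hσ⟩ := hne
    rw [Finset.mem_filter] at hσ
    exact Set.mem_biUnion hσ.1 hσ.2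
  calc μ {ω | numMaximal n d (fun τ => mark τ ω) ≠ 0}
      ≤ μ (⋃ σ ∈ Finset.univ.powersetCard d, {ω | memY (fun τ => mark τ ω) σ ∧
          ∀ v : Fin n, v ∉ σ → ¬ memY (fun τ => mark τ ω) (insert v σ)}) :=
        measure_mono hcover
    _ ≤ ∑ σ ∈ Finset.univ.powersetCard d, μ {ω | memY (fun τ => mark τ ω) σ ∧
          ∀ v : Fin n, v ∉ σ → ¬ memY (fun τ => mark τ ω) (insert v σ)} :=
        measure_biUnion_finset_le _ _
    _ ≤ ∑ _σ ∈ Finset.univ.powersetCard d,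
          ENNReal.ofReal (Real.exp (-q * ((n - d : ℕ) : ℝ))) :=
        Finset.sum_le_sum (fun σ hσ => key σ (Finset.mem_powersetCard.mp hσ).2)
    _ = (n.choose d : ENNReal) * ENNReal.ofReal (Real.exp (-q * ((n - d : ℕ) : ℝ))) := by
        rw [Finset.sum_const, Finset.card_powersetCard, Finset.card_univ, Fintype.card_fin,
          nsmul_eq_mul]

lemma numeric {d n : ℕ} {c pd : ℝ} (hc0 : 0 < c) (K : ℕ)
    (hpd0 : 0 < pd)
    (hn1 : d + 1 ≤ n) (hn2 : 2 * d ≤ n) (hn3 : 3 ≤ n)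
    (hg : 2 * ((d : ℝ) + 2) / c ^ K ≤ (n : ℝ) * pd / Real.log n) :
    (n.choose d : ENNReal) * ENNReal.ofReal (Real.exp (-(c ^ K * pd) * ((n - d : ℕ) : ℝ)))
      ≤ ENNReal.ofReal (((n : ℝ) ^ 2)⁻¹) := by
  have hn0 : (0:ℝ) < n := by exact_mod_cast (by omega : 0 < n)
  have hlog : 0 < Real.log n := Real.log_pos (by exact_mod_cast (by omega : 1 < n))
  have hcK : 0 < c ^ K := pow_pos hc0 K
  have hnp : 2 * ((d : ℝ) + 2) / c ^ K * Real.log n ≤ (n:ℝ) * pd :=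
    (le_div_iff₀ hlog).mp hg
  have hm : ((n - d : ℕ) : ℝ) = (n : ℝ) - d := by
    rw [Nat.cast_sub (by omega)]
  have hmge : (n : ℝ) / 2 ≤ ((n - d : ℕ) : ℝ) := by
    rw [hm]
    have h2d := (Nat.cast_le (α := ℝ)).mpr hn2
    push_cast at h2d
    linarith
  have hqm : ((d : ℝ) + 2) * Real.log n ≤ c ^ K * pd * ((n - d : ℕ) : ℝ) := by
    have h1 : c ^ K * pd * ((n:ℝ)/2) ≤ c ^ K * pd * ((n - d : ℕ) : ℝ) :=
      mul_le_mul_of_nonneg_left hmge (by positivity)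
    have h3 : c ^ K / 2 * (2 * ((d:ℝ) + 2) / c ^ K * Real.log n)
        ≤ c ^ K / 2 * ((n:ℝ) * pd) :=
      mul_le_mul_of_nonneg_left hnp (by positivity)
    have h2 : ((d:ℝ) + 2) * Real.log n ≤ c ^ K * pd * ((n:ℝ)/2) := by
      calc ((d:ℝ) + 2) * Real.log n
          = c ^ K / 2 * (2 * ((d:ℝ) + 2) / c ^ K * Real.log n) := by field_simp
        _ ≤ c ^ K / 2 * ((n:ℝ) * pd) := h3
        _ = c ^ K * pd * ((n:ℝ)/2) := by ring
    linarith
  have hexp : Real.exp (-(c ^ K * pd) * ((n - d : ℕ) : ℝ)) ≤ ((n:ℝ) ^ (d + 2))⁻¹ := by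
    have hle : Real.exp (-(c ^ K * pd) * ((n - d : ℕ) : ℝ))
        ≤ Real.exp (-(((d:ℝ) + 2) * Real.log n)) := by
      apply Real.exp_le_exp.mpr
      rw [neg_mul]
      exact neg_le_neg hqm
    refine hle.trans_eq ?_
    rw [Real.exp_neg]
    congr 1
    rw [show ((d:ℝ)+2) = ((d+2 : ℕ) : ℝ) by push_cast; ring, Real.exp_nat_mul,
      Real.exp_log hn0]
  rw [← ENNReal.ofReal_natCast, ← ENNReal.ofReal_mul (by positivity)]
  apply ENNReal.ofReal_le_ofReal
  have hchoose : (n.choose d : ℝ) ≤ (n:ℝ) ^ d := by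
    exact_mod_cast Nat.choose_le_pow n d
  calc (n.choose d : ℝ) * Real.exp (-(c ^ K * pd) * ((n - d : ℕ) : ℝ))
      ≤ (n:ℝ) ^ d * ((n:ℝ) ^ (d + 2))⁻¹ :=
        mul_le_mul hchoose hexp (Real.exp_nonneg _) (by positivity)
    _ = ((n:ℝ) ^ 2)⁻¹ := by
        rw [pow_add]
        field_simp

end Stmt7Aux

/-- If `min_{1≤i≤d-1} liminf pᵢ > 0` and `n·p_d/log n → ∞`, then almost
surely, for all sufficiently large `n`, `Y_d(n,p)` contains no maximal `(d-1)`-cell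
(the complexes for different `n` being coupled on a common probability space). -/
theorem stmt7 (d : ℕ) (hd : 2 ≤ d)
    (p : ℕ → ℕ → ℝ)
    (hp : ∀ n, d + 1 ≤ n → ∀ i, 1 ≤ i → i ≤ d → p n i ∈ Set.Ioc (0 : ℝ) 1)
    (hliminf : ∀ i, 1 ≤ i → i ≤ d - 1 → 0 < Filter.liminf (fun n : ℕ => p n i) atTop)
    (hpd : Tendsto (fun n : ℕ => (n : ℝ) * p n d / Real.log n) atTop atTop)
    {Ω : Type*} [MeasurableSpace Ω] (μ : Measure Ω) [IsProbabilityMeasure μ]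
    (mark : ∀ n : ℕ, Finset (Fin n) → Ω → Bool)
    (hmeas : ∀ n τ, Measurable (mark n τ))
    (hindep : ∀ n, iIndepFun (mark n) μ)
    (hprob : ∀ n, d + 1 ≤ n → ∀ τ : Finset (Fin n), 2 ≤ τ.card → τ.card ≤ d + 1 →
      μ {ω | mark n τ ω = true} = ENNReal.ofReal (p n (τ.card - 1))) :
    ∀ᵐ ω ∂μ, ∀ᶠ n in atTop, numMaximal n d (fun τ => mark n τ ω) = 0 := by
  classical
  obtain ⟨c, hc0, hc1, hcev⟩ : ∃ c : ℝ, 0 < c ∧ c ≤ 1 ∧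
      ∀ᶠ n in atTop, ∀ i, 1 ≤ i → i ≤ d - 1 → c ≤ p n i := by
    have hne : (Finset.Icc 1 (d - 1)).Nonempty := Finset.nonempty_Icc.mpr (by omega)
    set F := Finset.Icc 1 (d - 1) with hF
    have hev : ∀ᶠ n in atTop, ∀ i ∈ F, liminf (fun n : ℕ => p n i) atTop / 2 ≤ p n i := by
      rw [eventually_all_finset]
      intro i hi
      have hi' := Finset.mem_Icc.mp hi
      have hbdd : IsBoundedUnder (· ≥ ·) atTop (fun n : ℕ => p n i) := by
        refine ⟨0, ?_⟩
        rw [eventually_map]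
        filter_upwards [eventually_ge_atTop (d + 1)] with n hn
        exact (hp n hn i hi'.1 (by omega)).1.le
      have hlim := hliminf i hi'.1 hi'.2
      have hlt := eventually_lt_of_lt_liminf
        (show liminf (fun n : ℕ => p n i) atTop / 2 < liminf (fun n : ℕ => p n i) atTop by
          linarith) hbdd
      filter_upwards [hlt] with n hn using hn.le
    refine ⟨min (F.inf' hne fun i => liminf (fun n : ℕ => p n i) atTop / 2) 1, ?_,
      min_le_right _ _, ?_⟩
    · refine lt_min ?_ one_pos
      rw [Finset.lt_inf'_iff]
      intro i hi
      have hi' := Finset.mem_Icc.mp hi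
      have := hliminf i hi'.1 hi'.2
      linarith
    · filter_upwards [hev] with n hn i h1 h2
      have hiF : i ∈ F := Finset.mem_Icc.mpr ⟨h1, h2⟩
      exact le_trans (min_le_left _ _) ((Finset.inf'_le _ hiF).trans (hn i hiF))
  set K := 2 ^ (d + 1) with hK
  have hev2 : ∀ᶠ n in atTop,
      μ {ω | numMaximal n d (fun τ => mark n τ ω) ≠ 0}
        ≤ ENNReal.ofReal (((n : ℝ) ^ 2)⁻¹) := by
    have hg : ∀ᶠ n : ℕ in atTop,
        2 * ((d : ℝ) + 2) / c ^ K ≤ (n : ℝ) * p n d / Real.log n :=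
      hpd.eventually_ge_atTop _
    filter_upwards [hcev, hg, eventually_ge_atTop (d + 1), eventually_ge_atTop (2 * d),
      eventually_ge_atTop 3] with n hcn hgn hn1 hn2 hn3
    have hcore := Stmt7Aux.core hd hn1 μ (mark n) (hmeas n) (hindep n) (p n) (hprob n hn1)
      (fun i h1 h2 => ⟨(hp n hn1 i h1 h2).1, (hp n hn1 i h1 h2).2⟩) hc0 hc1 hcn
    exact hcore.trans (Stmt7Aux.numeric hc0 K (hp n hn1 d (by omega) le_rfl).1
      hn1 hn2 hn3 hgn)
  obtain ⟨N, hN⟩ := eventually_atTop.mp hev2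
  have hsum : (∑' n : ℕ, μ {ω | numMaximal n d (fun τ => mark n τ ω) ≠ 0}) ≠ ⊤ := by
    have hle : ∀ n : ℕ, μ {ω | numMaximal n d (fun τ => mark n τ ω) ≠ 0}
        ≤ (if n < N then 1 else 0) + ENNReal.ofReal (((n : ℝ) ^ 2)⁻¹) := by
      intro n
      by_cases h : n < N
      · rw [if_pos h]
        exact le_add_right prob_le_one
      · rw [if_neg h, zero_add]
        exact hN n (le_of_not_gt h)
    refine ne_top_of_le_ne_top ?_ (ENNReal.tsum_le_tsum hle)
    rw [ENNReal.tsum_add]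
    refine ENNReal.add_ne_top.mpr ⟨?_, ?_⟩
    · rw [tsum_eq_sum (s := Finset.range N) (fun n hn => if_neg (by simpa using hn))]
      refine (ENNReal.sum_lt_top.mpr (fun n _ => ?_)).ne
      split <;> simp
    · rw [← ENNReal.ofReal_tsum_of_nonneg (fun n => by positivity)
        (by simpa [one_div] using summable_one_div_nat_pow.mpr one_lt_two)]
      exact ENNReal.ofReal_ne_top
  have hfreq := MeasureTheory.measure_setOf_frequently_eq_zero hsum
  have hae : ∀ᵐ ω ∂μ, ¬ ∃ᶠ n in atTop, numMaximal n d (fun τ => mark n τ ω) ≠ 0 := by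
    rw [ae_iff]
    simp only [not_not]
    exact hfreq
  filter_upwards [hae] with ω hω
  rw [Filter.not_frequently] at hω
  filter_upwards [hω] with n hn
  exact not_ne_iff.mp hn
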